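/- arXiv:math/0112183 — 3 statements merged into one kernel-verified Lean document; each statement's English description precedes it below -/
import Mathlib

section
/- Let W be the Weyl group of a root system with simple roots Δ, and let W_P be the parabolic subgroup generated by the simple reflections s_β for β in a subset Δ_P of Δ. If s and s' are reflections in W neither of which lies in W_P, and s' = s·a for some a in W_P, then s' = s. -/
/-
We prove the theorem via a purely combinatorial argument, based on the
"Tits sign representation" η : W →* Perm (W × ℤˣ), which encodes, for each
w ∈ W and each u ∈ W, the parity ν(w, u) of the number of occurrences of u in
the right inversion sequence of any word for w.

Outline:
* `phi` are the generating involutions, `liftable` is the braid relation check,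
  `eta` is the lifted homomorphism, `nu` the resulting sign cocycle.
* `nu_reflection_self`: ν(t,t) = -1 for any reflection t.
* `nu_of_mem_parabolic`: ν(a,t) = 1 for a in the standard parabolic subgroup and
  any t outside it.
* `middle_decomp`: any reflection s can be written x·σm·x⁻¹ with ℓ(s) = 2ℓ(x)+1.
* `coset_aux`: the main statement, by strong induction on ℓ(s): writing s as a
  palindromic reduced word ρ ++ m :: ρ.reverse, the sign fact ν(s, a·s) = -1
  produces an index j with a⁻¹ = π((ρ ++ m :: ρ.reverse).eraseIdx j); if j is the
  middle letter then a = 1, and otherwise we obtain a strictly shorter instance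
  of the problem and conclude by induction.
-/

open List CoxeterSystem

namespace RCAux
variable {B : Type*} {W : Type*} [Group W] {M : CoxeterMatrix B} (cs : CoxeterSystem M W)

local prefix:100 "σ" => cs.simple
local prefix:100 "π" => cs.wordProd
local prefix:100 "ℓ" => cs.length

open Classical in
/-- The sign-flipping involution used to build the Tits reflection representation. -/
noncomputable def phi (i : B) : Equiv.Perm (W × ℤˣ) :=
  Function.Involutive.toPerm
    (fun p => (σ i * p.1 * σ i, if p.1 = σ i then -p.2 else p.2)) (by
      rintro ⟨w, ε⟩
      have h1 : σ i * (σ i * w * σ i) * σ i = w := by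
        have hss := cs.simple_mul_simple_self i
        calc σ i * (σ i * w * σ i) * σ i = (σ i * σ i) * w * (σ i * σ i) := by group
        _ = w := by rw [hss]; simp
      have h2 : (σ i * w * σ i = σ i) ↔ w = σ i := by
        constructor
        · intro hh
          have := congrArg (fun z => σ i * z * σ i) hh
          simpa [h1, ← mul_assoc] using this
        · rintro rfl
          calc σ i * σ i * σ i = 1 * σ i := by rw [cs.simple_mul_simple_self]
          _ = σ i := one_mul _
      simp only
      by_cases hw : w = σ i
      · simp [hw, h2, h1]
      · simp [hw, h2, h1, if_neg])

open Classical in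
lemma phi_apply (i : B) (w : W) (ε : ℤˣ) :
    phi cs i (w, ε) = (σ i * w * σ i, if w = σ i then -ε else ε) := rfl

open Classical in
lemma step_apply (i i' : B) (v : W) (δ : ℤˣ) :
    (phi cs i * phi cs i') (v, δ) =
      ((σ i * σ i') * v * (σ i * σ i')⁻¹,
        ((if v = σ i' then (-1 : ℤˣ) else 1) * (if v = σ i' * (σ i * σ i') then (-1:ℤˣ) else 1)) * δ) := by
  rw [Equiv.Perm.mul_apply, phi_apply, phi_apply]
  have hpos : σ i * (σ i' * v * σ i') * σ i = (σ i * σ i') * v * (σ i * σ i')⁻¹ := by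
    rw [mul_inv_rev, cs.inv_simple, cs.inv_simple]; group
  have hcond : (σ i' * v * σ i' = σ i) ↔ v = σ i' * (σ i * σ i') := by
    have hv : σ i' * (σ i * σ i') = σ i' * σ i * σ i' := by group
    rw [hv]
    constructor
    · intro hh
      calc v = (σ i' * σ i') * v * (σ i' * σ i') := by rw [cs.simple_mul_simple_self]; simp
      _ = σ i' * (σ i' * v * σ i') * σ i' := by group
      _ = σ i' * σ i * σ i' := by rw [hh]
    · rintro rfl
      calc σ i' * (σ i' * σ i * σ i') * σ i' = (σ i' * σ i') * σ i * (σ i' * σ i') := by group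
      _ = σ i := by rw [cs.simple_mul_simple_self]; simp
  rw [hpos]
  congr 1
  rw [hcond]
  split_ifs with hA hB hB
  · simp
  · simp
  · simp
  · simp

open Classical in
lemma pow_step_apply (i i' : B) (q : ℕ) (w : W) (ε : ℤˣ) :
    ((phi cs i * phi cs i') ^ q) (w, ε) =
      ((σ i * σ i')^q * w * ((σ i * σ i')^q)⁻¹,
        (∏ c ∈ Finset.range (2*q), if w = σ i' * (σ i * σ i')^c then (-1:ℤˣ) else 1) * ε) := by
  set g := σ i * σ i' with hg
  have hconj : ∀ q : ℕ, σ i' * g^q * σ i' = (g^q)⁻¹ := by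
    have hbase : σ i' * g * σ i' = g⁻¹ := by
      rw [hg, mul_inv_rev, cs.inv_simple, cs.inv_simple]
      calc σ i' * (σ i * σ i') * σ i' = σ i' * σ i * (σ i' * σ i') := by group
      _ = σ i' * σ i := by rw [cs.simple_mul_simple_self]; simp
    have hc : ∀ x : W, σ i' * x * σ i' = (MulAut.conj (σ i')) x := by
      intro x; simp [MulAut.conj_apply, cs.inv_simple]
    intro q; rw [hc, map_pow, ← hc, hbase, inv_pow]
  induction q with
  | zero => simp
  | succ q ih =>
    rw [pow_succ', Equiv.Perm.mul_apply, ih, step_apply]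
    rw [Prod.mk.injEq]
    constructor
    · calc σ i * σ i' * (g^q * w * (g^q)⁻¹) * (σ i * σ i')⁻¹
          = g * (g^q * w * (g^q)⁻¹) * g⁻¹ := by rw [← hg]
      _ = (g * g^q) * w * (g * g^q)⁻¹ := by group
      _ = g^(q+1) * w * (g^(q+1))⁻¹ := by rw [pow_succ']
    · have hL : (g^q)⁻¹ * σ i' = σ i' * g ^ q := by
        rw [← hconj q]
        calc σ i' * g^q * σ i' * σ i' = σ i' * g^q * (σ i' * σ i') := by group
        _ = σ i' * g^q := by rw [cs.simple_mul_simple_self, mul_one]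
      have hR : g ^ q * σ i' = σ i' * (g^q)⁻¹ := by
        rw [← hconj q]
        calc g^q * σ i' = (σ i' * σ i') * g^q * σ i' := by rw [cs.simple_mul_simple_self, one_mul]
        _ = σ i' * (σ i' * g^q * σ i') := by group
      have hiff : ∀ c : ℕ, (g ^ q * w * (g ^ q)⁻¹ = σ i' * g ^ c) ↔ (w = σ i' * g ^ (2*q + c)) := by
        intro c
        constructor
        · intro hh
          have hw : w = (g^q)⁻¹ * (σ i' * g ^ c) * g ^ q := by
            rw [← hh]; group
          rw [hw]
          calc (g^q)⁻¹ * (σ i' * g ^ c) * g ^ q = ((g^q)⁻¹ * σ i') * g ^ c * g ^ q := by group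
          _ = σ i' * g ^ q * g ^ c * g ^ q := by rw [hL]
          _ = σ i' * g ^ (2*q + c) := by rw [show 2*q+c = q+c+q by ring, pow_add, pow_add]; group
        · intro hh
          rw [hh]
          calc g ^ q * (σ i' * g ^ (2*q+c)) * (g^q)⁻¹
              = (g ^ q * σ i') * g ^ (2*q+c) * (g^q)⁻¹ := by group
          _ = σ i' * (g ^ q)⁻¹ * g ^ (2*q+c) * (g^q)⁻¹ := by rw [hR]
          _ = σ i' * g ^ c := by
              rw [show 2*q+c = q+(c+q) by ring, pow_add, pow_add]; group
      have hA := hiff 0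
      have hB := hiff 1
      simp only [pow_zero, mul_one, pow_one, Nat.add_zero] at hA hB
      rw [show 2*(q+1) = (2*q)+1+1 by ring, Finset.prod_range_succ, Finset.prod_range_succ,
        if_congr hA rfl rfl, if_congr hB rfl rfl]
      ac_rfl

open Classical in
lemma liftable : M.IsLiftable (fun i => phi cs i) := by
  intro i i'
  set md := M i i' with hmd
  rcases Nat.eq_zero_or_pos md with h0 | hpos
  · rw [h0, pow_zero]
  · apply Equiv.ext
    rintro ⟨w, ε⟩
    rw [pow_step_apply]
    have hrel : (σ i * σ i') ^ md = 1 := cs.simple_mul_simple_pow i i'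
    rw [hrel]
    have hsgn : (∏ c ∈ Finset.range (2*md), if w = σ i' * (σ i * σ i')^c then (-1:ℤˣ) else 1) = 1 := by
      rw [show 2*md = md + md by ring, Finset.prod_range_add]
      have heq : ∀ c ∈ Finset.range md,
          (if w = σ i' * (σ i * σ i')^(md + c) then (-1:ℤˣ) else 1)
          = (if w = σ i' * (σ i * σ i')^c then (-1:ℤˣ) else 1) := by
        intro c _
        rw [pow_add, hrel, one_mul]
      rw [Finset.prod_congr rfl heq]
      exact Int.units_mul_self _
    rw [hsgn]
    simp

/-- The Tits sign representation. -/
noncomputable def eta : W →* Equiv.Perm (W × ℤˣ) := cs.lift ⟨fun i => phi cs i, liftable cs⟩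

lemma eta_simple (i : B) : eta cs (σ i) = phi cs i := cs.lift_apply_simple _ i

open Classical in
/-- sign of `t` relative to the right inversion sequence of `ω`. -/
noncomputable def sgn (ω : List B) (t : W) : ℤˣ :=
  ((cs.rightInvSeq ω).map (fun u => if t = u then (-1 : ℤˣ) else 1)).prod

open Classical in
lemma sgn_cons (i : B) (ω : List B) (t : W) :
    sgn cs (i :: ω) t
      = (if t = (π ω)⁻¹ * σ i * π ω then (-1:ℤˣ) else 1) * sgn cs ω t := by
  rw [sgn, sgn, show cs.rightInvSeq (i :: ω) = ((π ω)⁻¹ * σ i * π ω) :: cs.rightInvSeq ω from rfl,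
    List.map_cons, List.prod_cons]

open Classical in
lemma eta_wordProd (ω : List B) (t : W) (ε : ℤˣ) :
    eta cs (π ω) (t, ε) = ((π ω) * t * (π ω)⁻¹, sgn cs ω t * ε) := by
  induction ω generalizing ε with
  | nil => simp [sgn]
  | cons i ω ih =>
    rw [cs.wordProd_cons, map_mul, Equiv.Perm.mul_apply, ih, eta_simple, phi_apply]
    have hcond : (π ω * t * (π ω)⁻¹ = σ i) ↔ t = (π ω)⁻¹ * σ i * π ω := by
      constructor
      · intro hh; rw [← hh]; group
      · intro hh; rw [hh]; group
    rw [Prod.mk.injEq]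
    constructor
    · rw [mul_inv_rev, cs.inv_simple]
      group
    · rw [sgn_cons]
      by_cases hc : t = (π ω)⁻¹ * σ i * π ω
      · rw [if_pos (hcond.mpr hc), if_pos hc, neg_one_mul, neg_mul]
      · rw [if_neg (fun hh => hc (hcond.mp hh)), if_neg hc, one_mul]

/-- The sign cocycle. -/
noncomputable def nu (w t : W) : ℤˣ := (eta cs w (t, 1)).2

lemma nu_wordProd (ω : List B) (t : W) : nu cs (π ω) t = sgn cs ω t := by
  rw [nu, eta_wordProd]; simp

lemma eta_apply (w t : W) (ε : ℤˣ) : eta cs w (t, ε) = (w * t * w⁻¹, nu cs w t * ε) := by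
  obtain ⟨ω, rfl⟩ := cs.wordProd_surjective w
  rw [eta_wordProd, nu_wordProd]

lemma nu_mul (x y t : W) : nu cs (x * y) t = nu cs y t * nu cs x (y * t * y⁻¹) := by
  have h1 := eta_apply cs (x * y) t 1
  have h2 : eta cs (x * y) (t, 1) = eta cs x (eta cs y (t, 1)) := by
    rw [map_mul]; rfl
  rw [eta_apply cs y t 1, eta_apply cs x _ _] at h2
  rw [h1] at h2
  have h2' := congrArg Prod.snd h2
  simp only [mul_one] at h2'
  rw [h2', mul_comm]

open Classical in
lemma nu_simple (i : B) (u : W) : nu cs (σ i) u = if u = σ i then -1 else 1 := by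
  have h : σ i = π [i] := by simp
  rw [h, nu_wordProd, sgn]
  simp

lemma nu_reflection_self {t : W} (ht : cs.IsReflection t) : nu cs t t = -1 := by
  obtain ⟨w, i, rfl⟩ := ht
  set t := w * σ i * w⁻¹ with hti
  have e1 : w⁻¹ * t * w = σ i := by rw [hti]; group
  have h1 : (1 : ℤˣ) = nu cs w⁻¹ t * nu cs w (σ i) := by
    have hh := nu_mul cs w w⁻¹ t
    rw [mul_inv_cancel, inv_inv, e1] at hh
    rw [← hh, nu]
    simp
  have h3 : t = w * (σ i * w⁻¹) := by rw [hti]; group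
  have e2 : (σ i * w⁻¹) * t * (σ i * w⁻¹)⁻¹ = σ i := by
    rw [mul_inv_rev, cs.inv_simple, inv_inv]
    calc σ i * w⁻¹ * t * (w * σ i) = σ i * (w⁻¹ * t * w) * σ i := by group
    _ = σ i * σ i * σ i := by rw [e1]
    _ = σ i := by rw [cs.simple_mul_simple_self, one_mul]
  have h4 : nu cs t t = nu cs (σ i * w⁻¹) t * nu cs w (σ i) := by
    have hh := nu_mul cs w (σ i * w⁻¹) t
    rw [← h3, e2] at hh
    rw [hh, mul_comm]
  have h5 : nu cs (σ i * w⁻¹) t = nu cs w⁻¹ t * (-1) := by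
    have hh := nu_mul cs (σ i) w⁻¹ t
    rw [inv_inv, e1, nu_simple, if_pos rfl] at hh
    exact hh
  rw [h4, h5, mul_right_comm, mul_neg_one, ← h1]

/-- every element of the standard parabolic is a product of simples indexed by `ΔP`. -/
lemma exists_word_of_mem (ΔP : Set B) {a : W}
    (ha : a ∈ Subgroup.closure (cs.simple '' ΔP)) :
    ∃ ω : List B, (∀ i ∈ ω, i ∈ ΔP) ∧ a = π ω := by
  induction ha using Subgroup.closure_induction with
  | mem x hx =>
    obtain ⟨i, hi, rfl⟩ := hx
    exact ⟨[i], by simpa using hi, by simp⟩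
  | one => exact ⟨[], by simp, by simp⟩
  | mul x y _ _ hx hy =>
    obtain ⟨ω₁, h1, rfl⟩ := hx
    obtain ⟨ω₂, h2, rfl⟩ := hy
    exact ⟨ω₁ ++ ω₂, by intro i hi; rcases List.mem_append.mp hi with h | h
                        · exact h1 i h
                        · exact h2 i h,
           by rw [cs.wordProd_append]⟩
  | inv x _ hx =>
    obtain ⟨ω, h1, rfl⟩ := hx
    exact ⟨ω.reverse, by intro i hi; exact h1 i (List.mem_reverse.mp hi),
           by rw [cs.wordProd_reverse]⟩

lemma wordProd_mem (ΔP : Set B) {ω : List B} (hω : ∀ i ∈ ω, i ∈ ΔP) :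
    π ω ∈ Subgroup.closure (cs.simple '' ΔP) := by
  induction ω with
  | nil => simp [Subgroup.one_mem]
  | cons i ω ih =>
    rw [cs.wordProd_cons]
    exact Subgroup.mul_mem _
      (Subgroup.subset_closure ⟨i, hω i (by simp), rfl⟩)
      (ih (fun j hj => hω j (List.mem_cons_of_mem _ hj)))

lemma rightInvSeq_mem (ΔP : Set B) {ω : List B} (hω : ∀ i ∈ ω, i ∈ ΔP) :
    ∀ u ∈ cs.rightInvSeq ω, u ∈ Subgroup.closure (cs.simple '' ΔP) := by
  induction ω with
  | nil => simp [rightInvSeq]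
  | cons i ω ih =>
    intro u hu
    rw [show cs.rightInvSeq (i :: ω) = ((π ω)⁻¹ * σ i * π ω) :: cs.rightInvSeq ω from rfl] at hu
    rcases List.mem_cons.mp hu with h | h
    · subst h
      have hmem : π ω ∈ Subgroup.closure (cs.simple '' ΔP) :=
        wordProd_mem cs ΔP (fun j hj => hω j (List.mem_cons_of_mem _ hj))
      exact Subgroup.mul_mem _ (Subgroup.mul_mem _ (Subgroup.inv_mem _ hmem)
        (Subgroup.subset_closure ⟨i, hω i (by simp), rfl⟩)) hmem
    · exact ih (fun j hj => hω j (List.mem_cons_of_mem _ hj)) u h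

open Classical in
lemma nu_of_mem_parabolic (ΔP : Set B) {a t : W}
    (ha : a ∈ Subgroup.closure (cs.simple '' ΔP))
    (ht : t ∉ Subgroup.closure (cs.simple '' ΔP)) :
    nu cs a t = 1 := by
  obtain ⟨ω, hω, rfl⟩ := exists_word_of_mem cs ΔP ha
  rw [nu_wordProd, sgn]
  apply List.prod_eq_one
  intro x hx
  obtain ⟨u, hu, rfl⟩ := List.mem_map.mp hx
  rw [if_neg]
  rintro rfl
  exact ht (rightInvSeq_mem cs ΔP hω _ hu)

open Classical in
/-- extraction: if the sign is not 1 then `t` occurs in the right inversion sequence. -/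
lemma exists_idx_of_sgn_ne_one {ω : List B} {t : W} (h : sgn cs ω t ≠ 1) :
    ∃ j, j < ω.length ∧ (cs.rightInvSeq ω).getD j 1 = t := by
  have hmem : t ∈ cs.rightInvSeq ω := by
    by_contra hmem
    apply h
    rw [sgn]
    apply List.prod_eq_one
    intro x hx
    obtain ⟨u, hu, rfl⟩ := List.mem_map.mp hx
    rw [if_neg]
    rintro rfl
    exact hmem hu
  obtain ⟨j, hj, hget⟩ := List.getElem_of_mem hmem
  refine ⟨j, ?_, ?_⟩
  · rwa [cs.length_rightInvSeq] at hj
  · rw [List.getD_eq_getElem _ _ hj, hget]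

lemma units_neg_one_ne_one : (-1 : ℤˣ) ≠ 1 := by decide

/-- middle decomposition of a reflection -/
lemma middle_decomp {t : W} (ht : cs.IsReflection t) :
    ∃ (x : W) (m : B), t = x * σ m * x⁻¹ ∧ ℓ t = 2 * ℓ x + 1 := by
  obtain ⟨δ, hδlen, hδ⟩ := cs.exists_reduced_word t
  have hν : sgn cs δ t = -1 := by rw [← nu_wordProd, ← hδ]; exact nu_reflection_self cs ht
  obtain ⟨j, hj, hget⟩ := exists_idx_of_sgn_ne_one cs (by rw [hν]; exact units_neg_one_ne_one)
  have hexch : π δ * t = π (δ.eraseIdx j) := by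
    rw [← hget]; exact cs.wordProd_mul_getD_rightInvSeq δ j
  have herase : π (δ.eraseIdx j) = 1 := by
    rw [← hexch, ← hδ]; exact ht.mul_self
  rw [List.eraseIdx_eq_take_drop_succ, cs.wordProd_append] at herase
  set x := π (δ.take j) with hx
  have hdrop : π (δ.drop (j+1)) = x⁻¹ := eq_inv_of_mul_eq_one_right herase
  have htx : t = x * σ (δ.get ⟨j, hj⟩) * x⁻¹ := by
    have := cs.getD_rightInvSeq δ j
    rw [hget] at this
    rw [this, hdrop, inv_inv]
    congr 1
    rw [List.getElem?_eq_getElem hj]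
    simp
  refine ⟨x, δ.get ⟨j, hj⟩, htx, ?_⟩
  have h1 : ℓ x ≤ j := by
    calc ℓ x ≤ (δ.take j).length := cs.length_wordProd_le _
    _ ≤ j := by simp
  have h2 : ℓ x + (j + 1) ≤ ℓ t := by
    have hxd : ℓ x = ℓ (π (δ.drop (j+1))) := by rw [hdrop, cs.length_inv]
    calc ℓ x + (j+1) = ℓ (π (δ.drop (j+1))) + (j+1) := by rw [hxd]
    _ ≤ (δ.drop (j+1)).length + (j+1) := by
        have := cs.length_wordProd_le (δ.drop (j+1)); omega
    _ = δ.length := by rw [List.length_drop]; omega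
    _ = ℓ t := by rw [hδ]; exact hδlen.symm
  have h3 : ℓ t ≤ 2 * ℓ x + 1 := by
    calc ℓ t ≤ ℓ (x * σ (δ.get ⟨j, hj⟩)) + ℓ x⁻¹ := by rw [htx] at *; exact cs.length_mul_le _ _
    _ ≤ ℓ x + ℓ (σ (δ.get ⟨j, hj⟩)) + ℓ x := by
        rw [cs.length_inv]
        have := cs.length_mul_le x (σ (δ.get ⟨j, hj⟩)); omega
    _ = 2 * ℓ x + 1 := by rw [cs.length_simple]; ring
  have hjt : j < ℓ t := by rw [hδ, hδlen]; exact hj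
  omega

theorem coset_aux (ΔP : Set B) :
    ∀ n : ℕ, ∀ s s' a : W, cs.IsReflection s → cs.IsReflection s' →
      s ∉ Subgroup.closure (cs.simple '' ΔP) → s' ∉ Subgroup.closure (cs.simple '' ΔP) →
      a ∈ Subgroup.closure (cs.simple '' ΔP) → s' = s * a → ℓ s ≤ n → s' = s := by
  intro n
  induction n using Nat.strong_induction_on with
  | _ n IH =>
  intro s s' a hs hs' hsP hs'P ha h hn
  -- basic identities
  have hss : s * s = 1 := hs.mul_self
  have h4 : a⁻¹ * s = s * a := by
    have h0 : (s * a)⁻¹ = s * a := by rw [← h]; exact hs'.inv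
    have h1 : (s * a)⁻¹ = a⁻¹ * s⁻¹ := mul_inv_rev _ _
    rw [h0, hs.inv] at h1
    exact h1.symm
  have key1 : s * a * s = a⁻¹ := by
    calc s * a * s = (a⁻¹ * s) * s := by rw [h4]
    _ = a⁻¹ * (s * s) := by group
    _ = a⁻¹ := by rw [hss, mul_one]
  have key2 : a * s * a = s := by
    calc a * s * a = a * (s * a) := by group
    _ = a * (a⁻¹ * s) := by rw [← h4]
    _ = s := by group
  -- the sign computation
  have hr : nu cs s (a * s) = -1 := by
    have h1 : nu cs s' s' = -1 := nu_reflection_self cs hs'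
    have h2 : nu cs (s * a) s' = nu cs a s' * nu cs s (a * s' * a⁻¹) := nu_mul cs s a s'
    have h3 : a * s' * a⁻¹ = a * s := by rw [h]; group
    have h5 : nu cs a s' = 1 := nu_of_mem_parabolic cs ΔP ha hs'P
    rw [← h] at h2
    rw [h1, h5, one_mul, h3] at h2
    exact h2.symm
  -- middle decomposition and palindromic word
  obtain ⟨x, m, hxm, hlen2⟩ := middle_decomp cs hs
  obtain ⟨ρ, hρlen, hρ⟩ := cs.exists_reduced_word x
  set ω := ρ ++ m :: ρ.reverse with hω
  have hπω : π ω = s := by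
    rw [hω, cs.wordProd_append, cs.wordProd_cons, cs.wordProd_reverse, ← hρ, ← mul_assoc]
    exact hxm.symm
  have hων : sgn cs ω (a * s) ≠ 1 := by
    rw [← nu_wordProd, hπω, hr]; exact units_neg_one_ne_one
  obtain ⟨j, hjlen, hget⟩ := exists_idx_of_sgn_ne_one cs hων
  have hea : a⁻¹ = π (ω.eraseIdx j) := by
    have hexch := cs.wordProd_mul_getD_rightInvSeq ω j
    rw [hget, hπω] at hexch
    rw [← hexch, ← mul_assoc, key1]
  have hωlen : ω.length = 2 * ρ.length + 1 := by
    simp [hω]; omega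
  have hℓs : ℓ s = 2 * ρ.length + 1 := by rw [hlen2, hρ, hρlen]
  rw [hωlen] at hjlen
  rcases lt_trichotomy j ρ.length with hlt | heq | hgt
  · -- j < ρ.length : recurse on s'
    have htake : ω.take j = ρ.take j := by
      rw [hω]; exact List.take_append_of_le_length (le_of_lt hlt)
    have hdrop : ω.drop (j+1) = ρ.drop (j+1) ++ m :: ρ.reverse := by
      rw [hω]; exact List.drop_append_of_le_length hlt
    set z₁ := π (ρ.take j) with hz₁
    set z₂ := π (ρ.drop (j+1)) with hz₂
    have he2 : a⁻¹ = z₁ * z₂ * (σ m * x⁻¹) := by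
      rw [hea, List.eraseIdx_eq_take_drop_succ, htake, hdrop, cs.wordProd_append,
        cs.wordProd_append, cs.wordProd_cons, cs.wordProd_reverse, ← hρ, hz₁, hz₂]
      group
    have ha' : a = x * σ m * (z₂⁻¹ * z₁⁻¹) := by
      have h7 := congrArg (·⁻¹) he2
      simp only [inv_inv, mul_inv_rev, cs.inv_simple] at h7
      rw [h7]
    have hs'eq : s' = x * (z₂⁻¹ * z₁⁻¹) := by
      calc s' = x * σ m * x⁻¹ * (x * σ m * (z₂⁻¹ * z₁⁻¹)) := by rw [h, ← hxm, ← ha']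
      _ = x * (σ m * σ m) * (z₂⁻¹ * z₁⁻¹) := by group
      _ = x * (z₂⁻¹ * z₁⁻¹) := by rw [cs.simple_mul_simple_self, mul_one]
    have l1 : ℓ z₁ ≤ j := by
      calc ℓ z₁ ≤ (ρ.take j).length := cs.length_wordProd_le _
      _ ≤ j := by simp
    have l2 : ℓ z₂ + (j + 1) ≤ ρ.length := by
      have h6 : ℓ z₂ ≤ (ρ.drop (j+1)).length := cs.length_wordProd_le _
      rw [List.length_drop] at h6
      omega
    have l3 : ℓ s' + 2 ≤ ℓ s := by
      have b1 : ℓ s' ≤ ℓ x + ℓ (z₂⁻¹ * z₁⁻¹) := by rw [hs'eq]; exact cs.length_mul_le _ _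
      have b2 : ℓ (z₂⁻¹ * z₁⁻¹) ≤ ℓ z₂⁻¹ + ℓ z₁⁻¹ := cs.length_mul_le _ _
      rw [cs.length_inv, cs.length_inv] at b2
      have b3 : ℓ x = ρ.length := by rw [hρ]; exact hρlen
      omega
    have hrec := IH (ℓ s') (by omega) s' s a⁻¹ hs' hs hs'P hsP
      (Subgroup.inv_mem _ ha) (by rw [h]; group) (le_refl _)
    exact hrec.symm
  · -- j = ρ.length : a = 1
    have herase : ω.eraseIdx j = ρ ++ ρ.reverse := by
      rw [heq, hω, List.eraseIdx_eq_take_drop_succ]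
      congr 1
      · exact List.take_left
      · rw [show (ρ ++ m :: ρ.reverse).drop (ρ.length + 1) = (m :: ρ.reverse).drop 1 from
          by rw [List.drop_append]; simp]
        simp
    rw [herase, cs.wordProd_append, cs.wordProd_reverse, ← hρ, mul_inv_cancel] at hea
    have ha1 : a = 1 := by rwa [inv_eq_one] at hea
    rw [h, ha1, mul_one]
  · -- ρ.length < j : recurse on r = a * s
    have htake : ω.take j = ρ ++ m :: ρ.reverse.take (j - ρ.length - 1) := by
      rw [hω, List.take_append, List.take_of_length_le (le_of_lt hgt),
        show j - ρ.length = (j - ρ.length - 1) + 1 by omega, List.take_succ_cons]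
      have e : j - ρ.length - 1 + 1 - 1 = j - ρ.length - 1 := by omega
      rw [e]
    have hdrop : ω.drop (j+1) = ρ.reverse.drop (j - ρ.length) := by
      rw [hω, List.drop_append, List.drop_eq_nil_of_le (by omega),
        List.nil_append, show j + 1 - ρ.length = (j - ρ.length) + 1 by omega,
        List.drop_succ_cons]
    set y₁ := π (ρ.reverse.take (j - ρ.length - 1)) with hy₁
    set y₂ := π (ρ.reverse.drop (j - ρ.length)) with hy₂
    have he2 : a⁻¹ = x * σ m * (y₁ * y₂) := by
      rw [hea, List.eraseIdx_eq_take_drop_succ, htake, hdrop, cs.wordProd_append,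
        cs.wordProd_append, cs.wordProd_cons, ← hρ, hy₁, hy₂]
      group
    have ha' : a = y₂⁻¹ * y₁⁻¹ * σ m * x⁻¹ := by
      have h7 := congrArg (·⁻¹) he2
      simp only [inv_inv, mul_inv_rev, cs.inv_simple] at h7
      rw [h7]; group
    have hre : a * s = y₂⁻¹ * (y₁⁻¹ * x⁻¹) := by
      calc a * s = (y₂⁻¹ * y₁⁻¹ * σ m * x⁻¹) * (x * σ m * x⁻¹) := by rw [← ha', ← hxm]
      _ = y₂⁻¹ * y₁⁻¹ * (σ m * σ m) * x⁻¹ := by group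
      _ = y₂⁻¹ * (y₁⁻¹ * x⁻¹) := by rw [cs.simple_mul_simple_self, mul_one]; group
    have l1 : ℓ y₁ ≤ j - ρ.length - 1 := by
      calc ℓ y₁ ≤ (ρ.reverse.take (j - ρ.length - 1)).length := cs.length_wordProd_le _
      _ ≤ j - ρ.length - 1 := by simp
    have l2 : ℓ y₂ + (j - ρ.length) ≤ ρ.length := by
      have h6 : ℓ y₂ ≤ (ρ.reverse.drop (j - ρ.length)).length := cs.length_wordProd_le _
      rw [List.length_drop, List.length_reverse] at h6
      omega
    have l3 : ℓ (a * s) + 2 ≤ ℓ s := by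
      have b1 : ℓ (a * s) ≤ ℓ y₂⁻¹ + ℓ (y₁⁻¹ * x⁻¹) := by rw [hre]; exact cs.length_mul_le _ _
      have b2 : ℓ (y₁⁻¹ * x⁻¹) ≤ ℓ y₁⁻¹ + ℓ x⁻¹ := cs.length_mul_le _ _
      rw [cs.length_inv] at b1
      rw [cs.length_inv, cs.length_inv] at b2
      have b3 : ℓ x = ρ.length := by rw [hρ]; exact hρlen
      omega
    have hrrefl : cs.IsReflection (a * s) := by
      have h7 : a * s = a * s' * a⁻¹ := by rw [h]; group
      rw [h7]; exact hs'.conj a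
    have hrP : a * s ∉ Subgroup.closure (cs.simple '' ΔP) := by
      intro hmem
      apply hsP
      have h8 : s = a⁻¹ * (a * s) := by group
      rw [h8]; exact Subgroup.mul_mem _ (Subgroup.inv_mem _ ha) hmem
    have hsra : s = (a * s) * a := key2.symm
    have hrec := IH (ℓ (a * s)) (by omega) (a * s) s a hrrefl hs hrP hsP ha hsra (le_refl _)
    have ha1 : a = 1 := by
      have h9 : a * s = 1 * s := by rw [← hrec, one_mul]
      exact mul_right_cancel h9
    rw [h, ha1, mul_one]

end RCAux

/- STATEMENT 0: Let W be the Weyl group of a root system with simple roots Δ (formalized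
as a Coxeter system `cs : CoxeterSystem M W` with `W` finite), and let W_P be the parabolic
subgroup generated by the simple reflections s_β for β in a subset Δ_P of Δ.
If s and s' are reflections in W neither of which lies in W_P, and s' = s·a for some
a in W_P, then s' = s. -/
theorem reflection_coset_claim {B W : Type*} [Group W] [Finite W] {M : CoxeterMatrix B}
    (cs : CoxeterSystem M W) (ΔP : Set B)
    (WP : Subgroup W) (hWP : WP = Subgroup.closure (cs.simple '' ΔP))
    (s s' : W) (hs : cs.IsReflection s) (hs' : cs.IsReflection s')
    (hsP : s ∉ WP) (hs'P : s' ∉ WP)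
    (a : W) (ha : a ∈ WP) (h : s' = s * a) : s' = s := by
  subst hWP
  exact RCAux.coset_aux cs ΔP (cs.length s) s s' a hs hs' hsP hs'P ha h (le_refl _)
end

section
/- Let W be a Weyl group with parabolic subgroup W_P, and suppose v = s·u for unequal cosets u, v in W/W_P and a reflection s in W. Then the reflection s with this property is unique. -/
namespace ReflUniqueAux

noncomputable section
open scoped Classical

open CoxeterSystem List

variable {B W : Type*} [Group W] {M : CoxeterMatrix B} (cs : CoxeterSystem M W)

local prefix:100 "σ" => cs.simple
local prefix:100 "π" => cs.wordProd
local prefix:100 "ℓ" => cs.length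

/-! ### The sign permutation representation -/

/-- Underlying map of the sign permutation associated to the `i`-th generator. -/
def fmap (i : B) : W × ℤˣ → W × ℤˣ :=
  fun p => (σ i * p.1 * σ i, p.2 * (if p.1 = σ i then -1 else 1))

theorem simple_conj_cancel (i : B) (w : W) : σ i * (σ i * w * σ i) * σ i = w := by
  rw [show σ i * (σ i * w * σ i) * σ i = (σ i * σ i) * w * (σ i * σ i) by group,
    cs.simple_mul_simple_self, one_mul, mul_one]

theorem fmap_involutive (i : B) : Function.Involutive (fmap cs i) := by
  rintro ⟨t, e⟩
  simp only [fmap]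
  have h1 : σ i * (σ i * t * σ i) * σ i = t := simple_conj_cancel cs i t
  have h2 : (σ i * t * σ i = σ i) ↔ (t = σ i) := by
    constructor
    · intro h
      have := congrArg (fun w => σ i * w * σ i) h
      rw [h1] at this
      rw [this, cs.simple_mul_simple_self, one_mul]
    · rintro rfl
      rw [cs.simple_mul_simple_self, one_mul]
  refine Prod.ext ?_ ?_
  · exact h1
  · show e * (if t = σ i then -1 else 1) * (if σ i * t * σ i = σ i then -1 else 1) = e
    rw [if_congr h2 rfl rfl]
    by_cases h : t = σ i <;> simp [h]

/-- The sign permutation associated to the `i`-th generator. -/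
def fperm (i : B) : Equiv.Perm (W × ℤˣ) := (fmap_involutive cs i).toPerm

theorem fperm_apply (i : B) (p : W × ℤˣ) :
    fperm cs i p = (σ i * p.1 * σ i, p.2 * (if p.1 = σ i then -1 else 1)) := rfl

theorem isLiftable_fperm : M.IsLiftable (fun i => fperm cs i) := by
  intro i j
  show (fperm cs i * fperm cs j) ^ M i j = 1
  obtain ⟨c, hc_def⟩ : ∃ c : W, c = σ i * σ j := ⟨_, rfl⟩
  have hc : c ^ M i j = 1 := by rw [hc_def]; exact cs.simple_mul_simple_pow i j
  have hsjc : σ j * c = c⁻¹ * σ j := by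
    rw [hc_def, mul_inv_rev, cs.inv_simple, cs.inv_simple]
    group
  set χ : W → ℕ → ℤˣ := fun t r => if t = (c ^ r)⁻¹ * σ j then -1 else 1 with hχ_def
  have hχe : ∀ t r, χ t r = if t = (c ^ r)⁻¹ * σ j then -1 else 1 := fun t r => rfl
  have key0 : ∀ (t : W) (e : ℤˣ),
      (fperm cs i * fperm cs j) (t, e) = (c * t * c⁻¹, e * χ t 0 * χ t 1) := by
    intro t e
    rw [Equiv.Perm.mul_apply, fperm_apply, fperm_apply]
    refine Prod.ext ?_ ?_
    · show σ i * (σ j * t * σ j) * σ i = c * t * c⁻¹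
      rw [hc_def, mul_inv_rev, cs.inv_simple, cs.inv_simple]
      group
    · show e * (if t = σ j then -1 else 1) * (if σ j * t * σ j = σ i then -1 else 1)
        = e * χ t 0 * χ t 1
      rw [hχe, hχe]
      have h0 : (c ^ 0)⁻¹ * σ j = σ j := by rw [pow_zero, inv_one, one_mul]
      have hc1 : (c ^ 1)⁻¹ * σ j = σ j * σ i * σ j := by
        rw [pow_one, hc_def, mul_inv_rev, cs.inv_simple, cs.inv_simple]
      have hiff : (σ j * t * σ j = σ i) ↔ (t = σ j * σ i * σ j) := by
        constructor
        · intro h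
          have := congrArg (fun w => σ j * w * σ j) h
          rw [simple_conj_cancel cs j t] at this
          rw [this]
        · rintro rfl
          rw [show σ j * (σ j * σ i * σ j) * σ j = (σ j * σ j) * σ i * (σ j * σ j) by group,
            cs.simple_mul_simple_self, one_mul, mul_one]
      rw [h0, hc1]
      simp only [hiff]
  have keyχ : ∀ (t : W) (r : ℕ), χ (c * t * c⁻¹) r = χ t (r + 2) := by
    intro t r
    rw [hχe, hχe]
    have harr : c⁻¹ * ((c ^ r)⁻¹ * σ j) * c = (c ^ (r + 2))⁻¹ * σ j := by
      calc c⁻¹ * ((c ^ r)⁻¹ * σ j) * c = c⁻¹ * (c ^ r)⁻¹ * (σ j * c) := by group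
        _ = c⁻¹ * (c ^ r)⁻¹ * (c⁻¹ * σ j) := by rw [hsjc]
        _ = (c ^ (r + 2))⁻¹ * σ j := by
            rw [show r + 2 = r + 1 + 1 by ring, pow_succ, pow_succ, mul_inv_rev, mul_inv_rev]
            group
    have hiff : (c * t * c⁻¹ = (c ^ r)⁻¹ * σ j) ↔ (t = (c ^ (r + 2))⁻¹ * σ j) := by
      constructor
      · intro h
        have := congrArg (fun w => c⁻¹ * w * c) h
        rw [show c⁻¹ * (c * t * c⁻¹) * c = t by group] at this
        rw [this, harr]
      · intro h
        rw [h, ← harr]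
        group
    rw [if_congr hiff rfl rfl]
  have main : ∀ (n : ℕ) (t : W) (e : ℤˣ),
      ((fperm cs i * fperm cs j) ^ n) (t, e)
        = (c ^ n * t * (c ^ n)⁻¹, e * ∏ r ∈ Finset.range (2 * n), χ t r) := by
    intro n
    induction n with
    | zero => intro t e; simp
    | succ n ih =>
      intro t e
      rw [pow_succ, Equiv.Perm.mul_apply, key0, ih]
      refine Prod.ext ?_ ?_
      · show c ^ n * (c * t * c⁻¹) * (c ^ n)⁻¹ = c ^ (n + 1) * t * (c ^ (n + 1))⁻¹
        group
      · show (e * χ t 0 * χ t 1) * ∏ r ∈ Finset.range (2 * n), χ (c * t * c⁻¹) r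
          = e * ∏ r ∈ Finset.range (2 * (n + 1)), χ t r
        have hrw : ∀ r ∈ Finset.range (2 * n), χ (c * t * c⁻¹) r = χ t (r + 2) :=
          fun r _ => keyχ t r
        rw [Finset.prod_congr rfl hrw]
        rw [show 2 * (n + 1) = 2 * n + 1 + 1 by ring]
        rw [Finset.prod_range_succ', Finset.prod_range_succ']
        have hcg : ∀ r ∈ Finset.range (2 * n), χ t (r + 1 + 1) = χ t (r + 2) := by
          intro r _
          norm_num
        rw [Finset.prod_congr rfl hcg]
        simp only [mul_assoc, mul_comm, mul_left_comm]
  apply Equiv.ext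
  rintro ⟨t, e⟩
  rw [main (M i j) t e, hc]
  have hsign : (∏ r ∈ Finset.range (2 * M i j), χ t r) = 1 := by
    rw [two_mul, Finset.prod_range_add]
    have hcg : ∀ r ∈ Finset.range (M i j), χ t (M i j + r) = χ t r := by
      intro r _
      rw [hχe, hχe]
      congr 2
      rw [pow_add, hc, one_mul]
    rw [Finset.prod_congr rfl hcg, Int.units_mul_self]
  rw [hsign]
  simp

/-- The sign representation. -/
def rho : W →* Equiv.Perm (W × ℤˣ) := cs.lift ⟨fun i => fperm cs i, isLiftable_fperm cs⟩

theorem rho_simple (i : B) : rho cs (σ i) = fperm cs i :=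
  cs.lift_apply_simple (isLiftable_fperm cs) i

/-- The sign cocycle. -/
def phi (w t : W) : ℤˣ := ((rho cs w) (t, 1)).2

theorem rho_apply (w : W) : ∀ (t : W) (e : ℤˣ),
    (rho cs w) (t, e) = (w * t * w⁻¹, e * phi cs w t) := by
  induction w using cs.simple_induction_left with
  | one =>
    intro t e
    simp only [map_one, Equiv.Perm.one_apply, phi, map_one]
    simp
  | mul_simple_left w i ih =>
    intro t e
    have expand : ∀ (e' : ℤˣ), (rho cs (σ i * w)) (t, e') =
        (σ i * (w * t * w⁻¹) * σ i, e' * phi cs w t * (if w * t * w⁻¹ = σ i then -1 else 1)) := by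
      intro e'
      rw [map_mul, Equiv.Perm.mul_apply, ih t e', rho_simple, fperm_apply]
    rw [expand e]
    have hphi : phi cs (σ i * w) t = phi cs w t * (if w * t * w⁻¹ = σ i then -1 else 1) := by
      show ((rho cs (σ i * w)) (t, 1)).2 = _
      rw [expand 1, one_mul]
    rw [hphi]
    refine Prod.ext ?_ ?_
    · show σ i * (w * t * w⁻¹) * σ i = (σ i * w) * t * (σ i * w)⁻¹
      rw [mul_inv_rev, cs.inv_simple]
      group
    · show e * phi cs w t * (if w * t * w⁻¹ = σ i then -1 else 1)
        = e * (phi cs w t * (if w * t * w⁻¹ = σ i then -1 else 1))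
      rw [mul_assoc]

theorem phi_mul (u v t : W) : phi cs (u * v) t = phi cs v t * phi cs u (v * t * v⁻¹) := by
  have h2 : (rho cs (u * v)) (t, 1)
      = (u * (v * t * v⁻¹) * u⁻¹, phi cs v t * phi cs u (v * t * v⁻¹)) := by
    rw [map_mul, Equiv.Perm.mul_apply, rho_apply cs v t 1, one_mul,
      rho_apply cs u (v * t * v⁻¹) (phi cs v t)]
  have h1 := rho_apply cs (u * v) t 1
  rw [h1] at h2
  have h3 := congrArg Prod.snd h2
  simpa using h3

theorem phi_one (t : W) : phi cs 1 t = 1 := by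
  simp [phi, map_one]

theorem phi_simple (i : B) (t : W) : phi cs (σ i) t = if t = σ i then -1 else 1 := by
  show ((rho cs (σ i)) (t, 1)).2 = _
  rw [rho_simple, fperm_apply, one_mul]

theorem phi_refl_self {t : W} (ht : cs.IsReflection t) : phi cs t t = -1 := by
  obtain ⟨u, i, rfl⟩ := ht
  set t := u * σ i * u⁻¹ with ht_def
  have hconj : u⁻¹ * t * (u⁻¹)⁻¹ = σ i := by rw [ht_def]; group
  have h1 : phi cs (u * u⁻¹) t = 1 := by rw [mul_inv_cancel, phi_one]
  rw [phi_mul cs u u⁻¹ t, hconj] at h1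
  have h2 : phi cs t t = phi cs u⁻¹ t * phi cs (u * σ i) (u⁻¹ * t * (u⁻¹)⁻¹) := by
    calc phi cs t t = phi cs ((u * σ i) * u⁻¹) t := by rw [ht_def]
      _ = _ := phi_mul cs _ _ _
  rw [hconj] at h2
  rw [phi_mul cs u (σ i) (σ i)] at h2
  have h3 : σ i * σ i * (σ i)⁻¹ = σ i := by group
  rw [h3, phi_simple, if_pos rfl] at h2
  rw [h2]
  calc phi cs u⁻¹ t * (-1 * phi cs u (σ i))
      = -1 * (phi cs u⁻¹ t * phi cs u (σ i)) := mul_left_comm _ _ _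
    _ = -1 := by rw [h1, mul_one]

/-! ### Word formula for the cocycle -/

theorem phi_wordProd (ω : List B) (t : W) :
    phi cs (π ω) t = ((cs.rightInvSeq ω).map (fun r => if r = t then (-1 : ℤˣ) else 1)).prod := by
  induction ω with
  | nil => simp [phi_one]
  | cons i ω ih =>
    rw [cs.wordProd_cons, phi_mul cs (σ i) (π ω) t, ih]
    show _ = ((((π ω)⁻¹ * σ i * π ω) :: cs.rightInvSeq ω).map
        (fun r => if r = t then (-1 : ℤˣ) else 1)).prod
    rw [List.map_cons, List.prod_cons]
    rw [phi_simple]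
    have hiff : (π ω * t * (π ω)⁻¹ = σ i) ↔ ((π ω)⁻¹ * σ i * π ω = t) := by
      constructor
      · intro h; rw [← h]; group
      · intro h; rw [← h]; group
    rw [if_congr hiff rfl rfl]
    exact mul_comm _ _

theorem mem_rightInvSeq_of_phi_neg {ω : List B} {t : W} (h : phi cs (π ω) t = -1) :
    t ∈ cs.rightInvSeq ω := by
  by_contra hmem
  rw [phi_wordProd] at h
  have : ((cs.rightInvSeq ω).map (fun r => if r = t then (-1 : ℤˣ) else 1)).prod = 1 := by
    apply List.prod_eq_one
    intro x hx
    rw [List.mem_map] at hx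
    obtain ⟨r, hr, rfl⟩ := hx
    rw [if_neg]
    intro hrt
    exact hmem (hrt ▸ hr)
  rw [this] at h
  exact absurd h (by decide)

/-! ### The inversion criterion -/

theorem phi_neg_iff {t : W} (ht : cs.IsReflection t) (w : W) :
    phi cs w t = -1 ↔ ℓ (w * t) < ℓ w := by
  constructor
  · intro h
    obtain ⟨ω, hred, rfl⟩ := cs.exists_reduced_word' w
    exact (cs.isRightInversion_of_mem_rightInvSeq hred
      (mem_rightInvSeq_of_phi_neg cs h)).2
  · intro h
    rcases Int.units_eq_one_or (phi cs w t) with h1 | h1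
    · exfalso
      have hwt : phi cs (w * t) t = -1 := by
        rw [phi_mul cs w t t]
        have : t * t * t⁻¹ = t := by rw [ht.mul_self, one_mul, ht.inv]
        rw [this, phi_refl_self cs ht, h1, mul_one]
      obtain ⟨ω, hred, hω⟩ := cs.exists_reduced_word' (w * t)
      rw [hω] at hwt
      have h2 := (cs.isRightInversion_of_mem_rightInvSeq hred
        (mem_rightInvSeq_of_phi_neg cs hwt)).2
      rw [← hω] at h2
      rw [mul_assoc, ht.mul_self, mul_one] at h2
      omega
    · exact h1

/-! ### Palindrome decomposition of reflections -/

theorem palindrome {t : W} (ht : cs.IsReflection t) :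
    ∃ (ω : List B) (k : B), cs.IsReduced ω ∧ t = (π ω)⁻¹ * σ k * π ω ∧
      ℓ t = 2 * ω.length + 1 := by
  obtain ⟨ωt, hlen, hωt⟩ := cs.exists_reduced_word t
  have hred : cs.IsReduced ωt := by
    show cs.length (cs.wordProd ωt) = ωt.length
    exact hlen
  have hphi : phi cs (π ωt) t = -1 := by rw [← hωt]; exact phi_refl_self cs ht
  have hmem : t ∈ cs.rightInvSeq ωt := mem_rightInvSeq_of_phi_neg cs hphi
  obtain ⟨j, hj, hget⟩ := List.mem_iff_getElem.mp hmem
  rw [cs.length_rightInvSeq] at hj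
  have hgetD : (cs.rightInvSeq ωt).getD j 1 = t := by
    rw [List.getD_eq_getElem _ 1 (by rw [cs.length_rightInvSeq]; exact hj)]
    exact hget
  rw [cs.getD_rightInvSeq] at hgetD
  rw [List.getElem?_eq_getElem hj] at hgetD
  simp only [Option.map_some, Option.getD_some] at hgetD
  set z := π (ωt.drop (j + 1)) with hz_def
  set k := ωt[j] with hk_def
  -- t = z⁻¹ * σ k * z
  have hpal : t = z⁻¹ * σ k * z := hgetD.symm
  -- decompose the word
  have hsplit : π ωt = π (ωt.take j) * (σ k * z) := by
    conv_lhs => rw [← List.take_append_drop j ωt]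
    rw [cs.wordProd_append]
    congr 1
    rw [List.drop_eq_getElem_cons hj, cs.wordProd_cons]
  have htake : π (ωt.take j) = z⁻¹ := by
    have : π (ωt.take j) * (σ k * z) = z⁻¹ * (σ k * z) := by
      rw [← hsplit, ← hωt, hpal, mul_assoc]
    exact mul_right_cancel this
  have hlen_take : ℓ (π (ωt.take j)) = j := by
    have h5 : ℓ (π (ωt.take j)) = (ωt.take j).length := hred.take j
    rw [h5, List.length_take]
    omega
  have hlen_drop : ℓ z = ωt.length - (j + 1) := by
    have h6 : ℓ (π (ωt.drop (j + 1))) = (ωt.drop (j + 1)).length :=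
      hred.drop (j + 1)
    rw [hz_def, h6, List.length_drop]
  have hlen_z : ℓ z = ωt.length - (j + 1) := hlen_drop
  have hjz : j = ℓ z := by
    rw [htake] at hlen_take
    rw [cs.length_inv] at hlen_take
    omega
  refine ⟨ωt.drop (j + 1), k, hred.drop (j + 1), ?_, ?_⟩
  · rw [← hz_def]; exact hpal
  · rw [List.length_drop]
    have hlt : ℓ t = ωt.length := by rw [hωt]; exact hlen
    omega

/-! ### Right inversion sequences of concatenations -/

theorem rightInvSeq_append (α β : List B) :
    cs.rightInvSeq (α ++ β)
      = (cs.rightInvSeq α).map (fun r => (π β)⁻¹ * r * π β) ++ cs.rightInvSeq β := by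
  induction α with
  | nil => simp [rightInvSeq]
  | cons i α ih =>
    show ((π (α ++ β))⁻¹ * σ i * π (α ++ β)) :: cs.rightInvSeq (α ++ β) = _
    rw [ih, cs.wordProd_append]
    rw [show ((π α * π β)⁻¹ * σ i * (π α * π β))
        = (π β)⁻¹ * ((π α)⁻¹ * σ i * π α) * π β by group]
    rfl

/-! ### Parabolic subgroup lemmas -/

theorem wordProd_mem_closure (X : Set B) (ω : List B) (hω : ∀ i ∈ ω, i ∈ X) :
    π ω ∈ Subgroup.closure (cs.simple '' X) := by
  induction ω with
  | nil => rw [cs.wordProd_nil]; exact Subgroup.one_mem _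
  | cons i ω ih =>
    rw [cs.wordProd_cons]
    exact Subgroup.mul_mem _
      (Subgroup.subset_closure ⟨i, hω i List.mem_cons_self, rfl⟩)
      (ih (fun j hj => hω j (List.mem_cons_of_mem i hj)))

theorem exists_word_of_mem_closure (X : Set B) {w : W}
    (hw : w ∈ Subgroup.closure (cs.simple '' X)) :
    ∃ ω : List B, (∀ i ∈ ω, i ∈ X) ∧ w = π ω := by
  induction hw using Subgroup.closure_induction with
  | mem x hx =>
    obtain ⟨i, hi, rfl⟩ := hx
    exact ⟨[i], by simpa using hi, (cs.wordProd_singleton i).symm⟩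
  | one => exact ⟨[], by simp, (cs.wordProd_nil).symm⟩
  | mul x y _ _ ihx ihy =>
    obtain ⟨ω₁, h₁, rfl⟩ := ihx
    obtain ⟨ω₂, h₂, rfl⟩ := ihy
    exact ⟨ω₁ ++ ω₂, by
      intro i hi
      rcases List.mem_append.mp hi with h | h
      exacts [h₁ i h, h₂ i h], (cs.wordProd_append ω₁ ω₂).symm⟩
  | inv x _ ihx =>
    obtain ⟨ω, h, rfl⟩ := ihx
    exact ⟨ω.reverse, fun i hi => h i (List.mem_reverse.mp hi),
      (cs.wordProd_reverse ω).symm⟩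

theorem rightInvSeq_mem_closure (X : Set B) (ω : List B) (hω : ∀ i ∈ ω, i ∈ X) :
    ∀ r ∈ cs.rightInvSeq ω, r ∈ Subgroup.closure (cs.simple '' X) := by
  induction ω with
  | nil => simp [rightInvSeq]
  | cons i ω ih =>
    intro r hr
    rcases List.mem_cons.mp hr with h | h
    · rw [h]
      have hπ : π ω ∈ Subgroup.closure (cs.simple '' X) :=
        wordProd_mem_closure cs X ω (fun j hj => hω j (List.mem_cons_of_mem i hj))
      exact Subgroup.mul_mem _
        (Subgroup.mul_mem _ (Subgroup.inv_mem _ hπ)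
          (Subgroup.subset_closure ⟨i, hω i List.mem_cons_self, rfl⟩)) hπ
    · exact ih (fun j hj => hω j (List.mem_cons_of_mem i hj)) r h

/-- Elements of a standard parabolic subgroup can only invert elements of that subgroup. -/
theorem phi_eq_one_of_not_mem (X : Set B) {w x : W}
    (hw : w ∈ Subgroup.closure (cs.simple '' X))
    (hx : x ∉ Subgroup.closure (cs.simple '' X)) :
    phi cs w x = 1 := by
  obtain ⟨ω, hω, rfl⟩ := exists_word_of_mem_closure cs X hw
  rw [phi_wordProd]
  apply List.prod_eq_one
  intro y hy
  rw [List.mem_map] at hy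
  obtain ⟨r, hr, rfl⟩ := hy
  rw [if_neg]
  intro hrx
  exact hx (hrx ▸ rightInvSeq_mem_closure cs X ω hω r hr)

/-! ### The core uniqueness result -/

theorem core (X : Set B) {x y : W}
    (hx : cs.IsReflection x) (hy : cs.IsReflection y)
    (hxy : x * y ∈ Subgroup.closure (cs.simple '' X))
    (hnx : x ∉ Subgroup.closure (cs.simple '' X)) :
    x = y := by
  classical
  by_contra hne
  set Q := Subgroup.closure (cs.simple '' X) with hQ_def
  set u₀ := x * y with hu₀_def
  have hu₀ : u₀ ≠ 1 := by
    intro h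
    apply hne
    have : x = y⁻¹ := eq_inv_of_mul_eq_one_left (by rw [← hu₀_def, h])
    rw [this, hy.inv]
  -- conjugation of powers of u₀ by x
  have hxu : ∀ k : ℤ, x * u₀ ^ k * x = u₀ ^ (-k) := by
    have hbase : x * u₀ * x⁻¹ = u₀⁻¹ := by
      rw [hu₀_def, mul_inv_rev, hx.inv, hy.inv]
      calc x * (x * y) * x = (x * x) * (y * x) := by group
        _ = y * x := by rw [hx.mul_self, one_mul]
    intro k
    have : (MulAut.conj x) (u₀ ^ k) = ((MulAut.conj x) u₀) ^ k := map_zpow _ _ _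
    have h2 : (MulAut.conj x) u₀ = u₀⁻¹ := by
      simpa [MulAut.conj_apply] using hbase
    rw [h2] at this
    have h3 : x * u₀ ^ k * x⁻¹ = u₀ ^ (-k) := by
      simp only [MulAut.conj_apply] at this
      rw [this, inv_zpow, ← zpow_neg]
    rwa [hx.inv] at h3
  have hcomm : ∀ k : ℤ, x * u₀ ^ k = u₀ ^ (-k) * x := by
    intro k
    have := hxu k
    calc x * u₀ ^ k = (x * u₀ ^ k * x) * x := by
          rw [mul_assoc, hx.mul_self, mul_one]
      _ = u₀ ^ (-k) * x := by rw [this]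
  -- all elements x * u₀ ^ k are reflections
  have hrefl : ∀ k : ℤ, cs.IsReflection (x * u₀ ^ k) := by
    intro k
    rcases Int.even_or_odd k with ⟨j, hj⟩ | ⟨j, hj⟩
    · have : x * u₀ ^ k = u₀ ^ (-j) * x * (u₀ ^ (-j))⁻¹ := by
        rw [hj]
        have h1 : x * u₀ ^ (j + j) = x * u₀ ^ j * u₀ ^ j := by
          rw [mul_assoc, ← zpow_add]
        rw [h1, hcomm j]
        rw [show (u₀ ^ (-j))⁻¹ = u₀ ^ j by rw [zpow_neg, inv_inv]]
      rw [this]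
      exact hx.conj _
    · have : x * u₀ ^ k = u₀ ^ (-j) * y * (u₀ ^ (-j))⁻¹ := by
        have hy_eq : y = x * u₀ := by
          rw [hu₀_def, ← mul_assoc, hx.mul_self, one_mul]
        rw [hj]
        have h1 : x * u₀ ^ (2 * j + 1) = x * u₀ ^ j * (u₀ * u₀ ^ j) := by
          rw [mul_assoc, ← zpow_one_add, ← zpow_add]
          congr 1
          ring
        rw [h1, hcomm j]
        rw [show (u₀ ^ (-j))⁻¹ = u₀ ^ j by rw [zpow_neg, inv_inv]]
        rw [hy_eq]
        group
      rw [this]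
      exact hy.conj _
  -- powers of u₀ are in Q
  have hmemQ : ∀ k : ℤ, u₀ ^ k ∈ Q := fun k => Subgroup.zpow_mem Q hxy k
  -- elements x * u₀ ^ k are not in Q
  have hnotQ : ∀ k : ℤ, x * u₀ ^ k ∉ Q := by
    intro k hk
    apply hnx
    have : x = (x * u₀ ^ k) * u₀ ^ (-k) := by
      rw [mul_assoc, ← zpow_add]
      simp
    rw [this]
    exact Subgroup.mul_mem _ hk (hmemQ _)
  -- choose minimal length element
  have hex : ∃ n : ℕ, ∃ k : ℤ, ℓ (x * u₀ ^ k) = n := ⟨ℓ x, 0, by simp⟩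
  set n₀ := Nat.find hex with hn₀_def
  obtain ⟨k₀, hk₀⟩ := Nat.find_spec hex
  set a := x * u₀ ^ k₀ with ha_def
  have hmin : ∀ k : ℤ, ℓ a ≤ ℓ (x * u₀ ^ k) := by
    intro k
    rw [ha_def, hk₀]
    exact Nat.find_min' hex ⟨k, rfl⟩
  have haj : ∀ j : ℤ, a * u₀ ^ j = x * u₀ ^ (k₀ + j) := by
    intro j
    rw [ha_def, mul_assoc, ← zpow_add]
  have hreflA : ∀ j : ℤ, cs.IsReflection (a * u₀ ^ j) := by
    intro j; rw [haj]; exact hrefl _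
  have hreflA0 : cs.IsReflection a := by
    have := hreflA 0
    simpa using this
  have hminA : ∀ j : ℤ, ℓ a ≤ ℓ (a * u₀ ^ j) := by
    intro j; rw [haj]; exact hmin _
  have hnotQA : ∀ j : ℤ, a * u₀ ^ j ∉ Q := by
    intro j; rw [haj]; exact hnotQ _
  have haconj : ∀ j : ℤ, a * u₀ ^ j * a = u₀ ^ (-j) := by
    intro j
    rw [ha_def]
    calc x * u₀ ^ k₀ * u₀ ^ j * (x * u₀ ^ k₀)
        = (x * u₀ ^ (k₀ + j) * x) * u₀ ^ k₀ := by
          rw [zpow_add]; group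
      _ = u₀ ^ (-(k₀ + j)) * u₀ ^ k₀ := by rw [hxu]
      _ = u₀ ^ (-j) := by rw [← zpow_add]; congr 1; ring
  -- mutual inversion
  have hMUT : ∀ j : ℤ, u₀ ^ j ≠ 1 → phi cs a (a * u₀ ^ j) = -1 := by
    intro j hj
    set r' := a * u₀ ^ j with hr'_def
    have hr'refl : cs.IsReflection r' := hreflA j
    have hr'notQ : r' ∉ Q := hnotQA j
    have hprod : a * r' = u₀ ^ j := by
      rw [hr'_def, ← mul_assoc, hreflA0.mul_self, one_mul]
    have h1 : phi cs (a * r') r' = 1 := by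
      rw [hprod]
      exact phi_eq_one_of_not_mem cs X (hmemQ j) hr'notQ
    rw [phi_mul cs a r' r'] at h1
    have h2 : r' * r' * r'⁻¹ = r' := by rw [hr'refl.mul_self, one_mul, hr'refl.inv]
    rw [h2, phi_refl_self cs hr'refl] at h1
    -- h1 : -1 * phi cs a r' = 1
    have := congrArg (fun z => (-1 : ℤˣ) * z) h1
    rw [← mul_assoc] at this
    norm_num at this
    exact this
  -- palindrome decomposition of a
  obtain ⟨ωz, k, hωzred, hpal, hlenpal⟩ := palindrome cs hreflA0
  set z := π ωz with hz_def
  -- the helper contradiction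
  have hHC : ∀ (j : ℤ) (r : W), r = a * u₀ ^ j → ℓ (z * r) < ℓ z → False := by
    intro j r hr hzr
    have hrrefl : cs.IsReflection r := hr ▸ hreflA j
    have hrinv : r⁻¹ = r := hrrefl.inv
    have hrar : r * a * r = a * u₀ ^ (2 * j) := by
      rw [hr]
      calc (a * u₀ ^ j) * a * (a * u₀ ^ j)
          = (a * u₀ ^ j) * (a * a) * u₀ ^ j := by group
        _ = (a * u₀ ^ j) * u₀ ^ j := by rw [hreflA0.mul_self, mul_one]
        _ = a * u₀ ^ (2 * j) := by rw [mul_assoc, ← zpow_add]; congr 1; ring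
    have hform : r * a * r = (z * r)⁻¹ * σ k * (z * r) := by
      rw [hpal]
      rw [mul_inv_rev, hrinv]
      group
    have hlb : ℓ a ≤ ℓ (r * a * r) := by rw [hrar]; exact hminA _
    have hub : ℓ (r * a * r) ≤ 2 * ℓ (z * r) + 1 := by
      rw [hform]
      calc ℓ ((z * r)⁻¹ * σ k * (z * r))
          ≤ ℓ ((z * r)⁻¹ * σ k) + ℓ (z * r) := cs.length_mul_le _ _
        _ ≤ ℓ ((z * r)⁻¹) + ℓ (σ k) + ℓ (z * r) := by
            have := cs.length_mul_le (z * r)⁻¹ (σ k)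
            omega
        _ = 2 * ℓ (z * r) + 1 := by
            rw [cs.length_inv, cs.length_simple]
            ring
    have hzlen : ℓ a = 2 * ℓ z + 1 := by
      rw [hlenpal]
      congr 2
      have hthis : ℓ (π ωz) = ωz.length := hωzred
      rw [hz_def, hthis]
    omega
  -- build the reduced palindromic word for a
  set Ω : List B := ωz.reverse ++ (k :: ωz) with hΩ_def
  have hπΩ : π Ω = a := by
    rw [hΩ_def, cs.wordProd_append, cs.wordProd_cons, cs.wordProd_reverse, hpal]
    rw [← hz_def, mul_assoc]
  have hredΩ : cs.IsReduced Ω := by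
    show cs.length (cs.wordProd Ω) = Ω.length
    rw [hπΩ, hΩ_def]
    rw [List.length_append, List.length_reverse, List.length_cons]
    rw [hlenpal]
    ring
  -- the element r' = a * u₀
  have hu₀1 : u₀ ^ (1 : ℤ) ≠ 1 := by rwa [zpow_one]
  have hφr' : phi cs a (a * u₀ ^ (1 : ℤ)) = -1 := hMUT 1 hu₀1
  set r' := a * u₀ ^ (1 : ℤ) with hr'_def
  have hmem : r' ∈ cs.rightInvSeq Ω := by
    apply mem_rightInvSeq_of_phi_neg cs
    rw [hπΩ]
    exact hφr'
  rw [hΩ_def, rightInvSeq_append cs] at hmem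
  rcases List.mem_append.mp hmem with hmem | hmem
  · -- r' in the first (reflected) half
    rw [List.mem_map] at hmem
    obtain ⟨e, he, her'⟩ := hmem
    have heL : e ∈ cs.leftInvSeq ωz := by
      rw [cs.rightInvSeq_reverse] at he
      exact List.mem_reverse.mp he
    have hez : ℓ (e * z) < ℓ z := by
      have := cs.isLeftInversion_of_mem_leftInvSeq hωzred heL
      rw [← hz_def] at this
      exact this.2
    -- r'' := a * r' * a = a * u₀⁻¹
    have hr'' : a * r' * a = a * u₀ ^ (-1 : ℤ) := by
      rw [hr'_def]
      calc a * (a * u₀ ^ (1 : ℤ)) * a = (a * a) * (u₀ ^ (1 : ℤ) * a) := by group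
        _ = u₀ ^ (1 : ℤ) * a := by rw [hreflA0.mul_self, one_mul]
        _ = a * (a * u₀ ^ (1 : ℤ) * a) := by
            rw [show a * (a * u₀ ^ (1 : ℤ) * a) = (a * a) * (u₀ ^ (1 : ℤ) * a) by group,
              hreflA0.mul_self, one_mul]
        _ = a * u₀ ^ (-1 : ℤ) := by rw [haconj]
    -- compute z * (a * r' * a) = e * z
    have hπcons : π (k :: ωz) = σ k * z := by rw [cs.wordProd_cons, hz_def]
    have hr'e : r' = (σ k * z)⁻¹ * e * (σ k * z) := by
      rw [← her', hπcons]
    have h8 : σ k * z * a = z := by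
      rw [hpal, show σ k * z * (z⁻¹ * σ k * z) = (σ k * σ k) * z by group,
        cs.simple_mul_simple_self, one_mul]
    have hara : a * r' * a = z⁻¹ * e * z := by
      rw [hr'e]
      calc a * ((σ k * z)⁻¹ * e * (σ k * z)) * a
          = (σ k * z * a)⁻¹ * e * (σ k * z * a) := by
            rw [show (σ k * z * a)⁻¹ = a⁻¹ * (σ k * z)⁻¹ by group, hreflA0.inv]
            group
        _ = z⁻¹ * e * z := by rw [h8]
    have hzr'' : z * (a * r' * a) = e * z := by
      rw [hara]
      group
    exact hHC (-1) (a * r' * a) hr'' (by rw [hzr'']; exact hez)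
  · rcases List.mem_cons.mp hmem with h | h
    · -- r' equals the middle entry, which is a itself
      have : r' = a := by
        rw [h, ← hz_def, ← hpal]
      rw [hr'_def] at this
      apply hu₀1
      calc u₀ ^ (1 : ℤ) = a * (a * u₀ ^ (1 : ℤ)) := by
            rw [← mul_assoc, hreflA0.mul_self, one_mul]
        _ = a * a := by rw [this]
        _ = 1 := hreflA0.mul_self
    · -- r' in the second half
      have := cs.isRightInversion_of_mem_rightInvSeq hωzred h
      rw [← hz_def] at this
      exact hHC 1 r' rfl this.2

end
end ReflUniqueAux

/- STATEMENT 3: Let W be a Weyl group (formalized as a finite Coxeter group) with parabolic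
subgroup W_P, and suppose v = s·u for unequal cosets u, v in W/W_P and a reflection s in W.
Then the reflection s with this property is unique. -/
theorem reflection_unique {B W : Type*} [Group W] [Finite W] {M : CoxeterMatrix B}
    (cs : CoxeterSystem M W) (ΔP : Set B)
    (WP : Subgroup W) (hWP : WP = Subgroup.closure (cs.simple '' ΔP))
    (u v : W ⧸ WP) (huv : u ≠ v)
    (s s' : W) (hs : cs.IsReflection s) (hs' : cs.IsReflection s')
    (h : v = s • u) (h' : v = s' • u) : s = s' := by
  subst hWP
  obtain ⟨g, rfl⟩ := QuotientGroup.mk_surjective u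
  have hss : (QuotientGroup.mk (s * g) : W ⧸ Subgroup.closure (cs.simple '' ΔP))
      = QuotientGroup.mk (s' * g) := by
    have hsmul : s • (QuotientGroup.mk g : W ⧸ Subgroup.closure (cs.simple '' ΔP))
        = s' • (QuotientGroup.mk g : W ⧸ Subgroup.closure (cs.simple '' ΔP)) := by
      rw [← h, ← h']
    simpa using hsmul
  have hmem : (s * g)⁻¹ * (s' * g) ∈ Subgroup.closure (cs.simple '' ΔP) :=
    QuotientGroup.eq.mp hss
  have hnmem : g⁻¹ * (s * g) ∉ Subgroup.closure (cs.simple '' ΔP) := by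
    intro hc
    apply huv
    rw [h]
    have heq : (QuotientGroup.mk g : W ⧸ Subgroup.closure (cs.simple '' ΔP))
        = QuotientGroup.mk (s * g) := QuotientGroup.eq.mpr hc
    have hsmulmk : s • (QuotientGroup.mk g : W ⧸ Subgroup.closure (cs.simple '' ΔP))
        = QuotientGroup.mk (s * g) := rfl
    rw [hsmulmk]
    exact heq
  have hxy : (g⁻¹ * s * g) * (g⁻¹ * s' * g) ∈ Subgroup.closure (cs.simple '' ΔP) := by
    have heq : (s * g)⁻¹ * (s' * g) = (g⁻¹ * s * g) * (g⁻¹ * s' * g) := by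
      rw [mul_inv_rev, hs.inv]
      group
    rw [← heq]
    exact hmem
  have hnx : g⁻¹ * s * g ∉ Subgroup.closure (cs.simple '' ΔP) := by
    intro hc
    rw [mul_assoc] at hc
    exact hnmem hc
  have hxrefl : cs.IsReflection (g⁻¹ * s * g) := by
    have := hs.conj g⁻¹
    rwa [inv_inv] at this
  have hyrefl : cs.IsReflection (g⁻¹ * s' * g) := by
    have := hs'.conj g⁻¹
    rwa [inv_inv] at this
  have hfin := ReflUniqueAux.core cs ΔP hxrefl hyrefl hxy hnx
  exact mul_left_cancel (mul_right_cancel hfin)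
end

section
/- Fix r ≤ n, and let u and v be cosets in S_n/(S_r×S_{n−r}) corresponding to subsets I and J with I ∪ {q} = J ∪ {p} for some p ∈ I∖J, q ∈ J∖I, p < q. Then the Young diagram of λ(u) is obtained from the Young diagram of λ(v) by removing a rim hook (a connected border strip) of q − p boxes; in particular λ(u) ⊆ λ(v) and |λ(v)| − |λ(u)| = q − p. -/
/- STATEMENT 12: Fix r ≤ n, and let u and v be cosets in S_n/(S_r×S_{n−r}), identified with
r-element subsets I and J of {1,…,n}, with I ∪ {q} = J ∪ {p} for some p ∈ I∖J, q ∈ J∖I,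
p < q.  Then the Young diagram of λ(u) is obtained from the Young diagram of λ(v) by
removing a rim hook (a connected border strip: a connected skew shape with no 2×2 square)
of q − p boxes; in particular λ(u) ⊆ λ(v) and |λ(v)| − |λ(u)| = q − p. -/

/-- The partition associated to an r-element subset `I` of Fin n: if the elements of `I`
in increasing order are a₁ < … < a_r (0-indexed values), then
λ i = a_{r−1−i} − (r−1−i).  (This is the partition of the minimal-length coset
representative with image `I` on the first r positions.) -/
def subsetToPartition {n : ℕ} (r : ℕ) (I : Finset (Fin n)) (h : I.card = r) : Fin r → ℕ :=
  fun i => ((I.orderIsoOfFin h ⟨r - 1 - i.val, by have := i.isLt; omega⟩ : Fin n)).val -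
    (r - 1 - i.val)

/-- The set of cells (row, column) of the Young diagram of λ. -/
def cells {r : ℕ} (lam : Fin r → ℕ) : Set (ℕ × ℕ) :=
  {c : ℕ × ℕ | ∃ i : Fin r, c.1 = i.val ∧ c.2 < lam i}

/-- Two cells are adjacent if they differ by 1 in exactly one coordinate. -/
def CellAdj (a b : ℕ × ℕ) : Prop :=
  (a.1 = b.1 ∧ (a.2 = b.2 + 1 ∨ b.2 = a.2 + 1)) ∨
  (a.2 = b.2 ∧ (a.1 = b.1 + 1 ∨ b.1 = a.1 + 1))

/-- A rim hook (border strip): a nonempty, edge-connected set of cells containing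
no 2×2 square. -/
def IsRimHook (S : Set (ℕ × ℕ)) : Prop :=
  S.Nonempty ∧
  (∀ a ∈ S, ∀ b ∈ S, Relation.ReflTransGen (fun x y => x ∈ S ∧ y ∈ S ∧ CellAdj x y) a b) ∧
  (∀ i j : ℕ, ¬((i, j) ∈ S ∧ (i + 1, j) ∈ S ∧ (i, j + 1) ∈ S ∧ (i + 1, j + 1) ∈ S))



namespace RimHookAux

/-- count of elements of `s` with value ≤ v -/
def g {n : ℕ} (s : Finset (Fin n)) (v : ℕ) : ℕ :=
  (s.filter (fun x => x.val ≤ v)).card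

lemma g_le_card {n : ℕ} (s : Finset (Fin n)) (v : ℕ) : g s v ≤ s.card :=
  Finset.card_le_card (Finset.filter_subset _ _)

lemma g_mono {n : ℕ} (s : Finset (Fin n)) {v w : ℕ} (h : v ≤ w) : g s v ≤ g s w := by
  apply Finset.card_le_card
  intro x hx
  simp only [Finset.mem_filter] at *
  exact ⟨hx.1, le_trans hx.2 h⟩

lemma g_succ {n : ℕ} (s : Finset (Fin n)) (v : ℕ) : g s (v + 1) ≤ g s v + 1 := by
  have hsub : s.filter (fun x => x.val ≤ v + 1) ⊆
      s.filter (fun x => x.val ≤ v) ∪ s.filter (fun x => x.val = v + 1) := by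
    intro x hx
    simp only [Finset.mem_filter, Finset.mem_union] at *
    rcases Nat.lt_or_ge x.val (v + 1) with h | h
    · exact Or.inl ⟨hx.1, by omega⟩
    · exact Or.inr ⟨hx.1, by omega⟩
  have h1 : (s.filter (fun x => x.val = v + 1)).card ≤ 1 := by
    apply Finset.card_le_one.mpr
    intro a ha b hb
    simp only [Finset.mem_filter] at ha hb
    exact Fin.ext (ha.2.trans hb.2.symm)
  calc g s (v+1) ≤ (s.filter (fun x => x.val ≤ v) ∪ s.filter (fun x => x.val = v + 1)).card :=
        Finset.card_le_card hsub
    _ ≤ g s v + (s.filter (fun x => x.val = v + 1)).card := Finset.card_union_le _ _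
    _ ≤ g s v + 1 := by omega

lemma g_le {n : ℕ} (s : Finset (Fin n)) (v : ℕ) : g s v ≤ v + 1 := by
  have := Finset.card_le_card_of_injOn (f := Fin.val)
    (s := s.filter (fun x => x.val ≤ v)) (t := Finset.range (v + 1))
    (by intro a ha; simp only [Finset.coe_filter, Set.mem_setOf_eq] at ha; simp; omega)
    (Fin.val_injective.injOn)
  simpa [g] using this

/-- key: a_j ≤ v iff more than j elements are ≤ v -/
lemma le_iff {n r : ℕ} (s : Finset (Fin n)) (h : s.card = r) (j : Fin r) (v : ℕ) :
    (s.orderEmbOfFin h j).val ≤ v ↔ j.val < g s v := by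
  constructor
  · intro hle
    have hcard : (Finset.univ : Finset (Fin (j.val + 1))).card ≤
        (s.filter (fun x => x.val ≤ v)).card := by
      apply Finset.card_le_card_of_injOn
        (f := fun i => s.orderEmbOfFin h (Fin.castLE j.isLt i))
      · intro i _
        simp only [Finset.coe_filter, Set.mem_setOf_eq]
        refine ⟨Finset.orderEmbOfFin_mem s h _, ?_⟩
        have hmono : (s.orderEmbOfFin h (Fin.castLE j.isLt i)) ≤ s.orderEmbOfFin h j := by
          apply (s.orderEmbOfFin h).monotone
          exact Fin.mk_le_mk.mpr (Nat.lt_succ_iff.mp i.isLt)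
        exact le_trans hmono hle
      · exact ((s.orderEmbOfFin h).injective.comp (Fin.castLE_injective _)).injOn
    simpa [g] using hcard
  · intro hlt
    by_contra hv
    push_neg at hv
    have hcard : g s v ≤ (Finset.range j.val).card := by
      apply Finset.card_le_card_of_injOn
        (f := fun x => if hx : x ∈ s then ((s.orderIsoOfFin h).symm ⟨x, hx⟩).val else 0)
      · intro x hx
        simp only [Finset.coe_filter, Set.mem_setOf_eq] at hx
        simp only [dif_pos hx.1]
        simp only [Finset.coe_range, Set.mem_Iio]
        set i := (s.orderIsoOfFin h).symm ⟨x, hx.1⟩ with hi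
        have hax : s.orderEmbOfFin h i = x := by
          have := Finset.coe_orderIsoOfFin_apply s h i
          rw [hi] at this ⊢
          rw [← this]
          simp
        have hval : (s.orderEmbOfFin h i).val < (s.orderEmbOfFin h j).val := by
          rw [hax]; omega
        exact (s.orderEmbOfFin h).lt_iff_lt.mp (Fin.lt_def.mpr hval)
      · intro x hx y hy hxy
        simp only [Finset.coe_filter, Set.mem_setOf_eq] at hx hy
        dsimp only at hxy
        rw [dif_pos hx.1, dif_pos hy.1] at hxy
        have : (s.orderIsoOfFin h).symm ⟨x, hx.1⟩ = (s.orderIsoOfFin h).symm ⟨y, hy.1⟩ :=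
          Fin.ext hxy
        have := congrArg (s.orderIsoOfFin h) this
        simpa [Subtype.ext_iff] using this
    simp at hcard
    omega

lemma idx_le {n r : ℕ} (s : Finset (Fin n)) (h : s.card = r) (j : Fin r) :
    j.val ≤ (s.orderEmbOfFin h j).val := by
  have h1 := (le_iff s h j (s.orderEmbOfFin h j).val).mp le_rfl
  have h2 := g_le s (s.orderEmbOfFin h j).val
  omega

lemma stp_eq {n r : ℕ} (s : Finset (Fin n)) (h : s.card = r) (i : Fin r) :
    subsetToPartition r s h i =
      (s.orderEmbOfFin h ⟨r - 1 - i.val, by have := i.isLt; omega⟩).val - (r - 1 - i.val) := by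
  unfold subsetToPartition
  rw [Finset.coe_orderIsoOfFin_apply]

lemma mem_cells_iff {n r : ℕ} (s : Finset (Fin n)) (h : s.card = r) (x : ℕ × ℕ) :
    x ∈ cells (subsetToPartition r s h) ↔
      x.1 < r ∧ g s (x.2 + (r - 1 - x.1)) ≤ r - 1 - x.1 := by
  constructor
  · rintro ⟨i, hx1, hx2⟩
    rw [stp_eq] at hx2
    have hr1 : x.1 < r := hx1 ▸ i.isLt
    refine ⟨hr1, ?_⟩
    set j : Fin r := ⟨r - 1 - i.val, by have := i.isLt; omega⟩ with hj
    have hji := idx_le s h j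
    have hjval : j.val = r - 1 - x.1 := by simp only [hj]; omega
    have hnot : ¬ ((s.orderEmbOfFin h j).val ≤ x.2 + (r - 1 - x.1)) := by
      rw [← hjval]; omega
    rw [le_iff] at hnot
    omega
  · rintro ⟨h1, h2⟩
    refine ⟨⟨x.1, h1⟩, rfl, ?_⟩
    rw [stp_eq]
    set j : Fin r := ⟨r - 1 - x.1, by omega⟩ with hj
    have hji := idx_le s h j
    have hnot : ¬ (j.val < g s (x.2 + (r - 1 - x.1))) := by
      simp only [hj]; omega
    rw [← le_iff s h j] at hnot
    simp only [hj] at hnot hji ⊢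
    omega

end RimHookAux

open RimHookAux in
theorem rim_hook_removal {n r : ℕ} (hr : r ≤ n)
    (I J : Finset (Fin n)) (hI : I.card = r) (hJ : J.card = r)
    (p q : Fin n) (hp : p ∈ I \ J) (hq : q ∈ J \ I) (hpq : p < q)
    (hunion : I ∪ {q} = J ∪ {p}) :
    (∀ i : Fin r, subsetToPartition r I hI i ≤ subsetToPartition r J hJ i) ∧
    IsRimHook (cells (subsetToPartition r J hJ) \ cells (subsetToPartition r I hI)) ∧
    (cells (subsetToPartition r J hJ) \ cells (subsetToPartition r I hI)).ncard =
      q.val - p.val := by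
  obtain ⟨hpI, hpJ⟩ := Finset.mem_sdiff.mp hp
  obtain ⟨hqJ, hqI⟩ := Finset.mem_sdiff.mp hq
  have hpq' : p.val < q.val := hpq
  have hne : p ≠ q := ne_of_lt hpq
  -- membership description of J
  have hJmem : ∀ x : Fin n, x ∈ J ↔ (x = q ∨ (x ∈ I ∧ x ≠ p)) := by
    intro x
    have hx := Finset.ext_iff.mp hunion x
    simp only [Finset.mem_union, Finset.mem_singleton] at hx
    by_cases h1 : x = p
    · subst h1; tauto
    · by_cases h2 : x = q
      · subst h2; tauto
      · tauto
  -- counting function comparisons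
  have hg1 : ∀ v : ℕ, p.val ≤ v → v < q.val → g J v + 1 = g I v := by
    intro v hv1 hv2
    have hfil : J.filter (fun x => x.val ≤ v) = (I.filter (fun x => x.val ≤ v)).erase p := by
      ext x
      simp only [Finset.mem_filter, Finset.mem_erase, hJmem x]
      constructor
      · rintro ⟨(rfl | ⟨hxI, hxp⟩), hxv⟩
        · omega
        · exact ⟨hxp, hxI, hxv⟩
      · rintro ⟨hxp, hxI, hxv⟩
        exact ⟨Or.inr ⟨hxI, hxp⟩, hxv⟩
    have hpfil : p ∈ I.filter (fun x => x.val ≤ v) := by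
      simp only [Finset.mem_filter]; exact ⟨hpI, hv1⟩
    have hpos : 1 ≤ g I v := Finset.card_pos.mpr ⟨p, hpfil⟩
    have : g J v = g I v - 1 := by
      unfold g
      rw [hfil, Finset.card_erase_of_mem hpfil]
    omega
  have hg2 : ∀ v : ℕ, v < p.val → g J v = g I v := by
    intro v hv
    unfold g
    congr 1
    ext x
    simp only [Finset.mem_filter, hJmem x]
    constructor
    · rintro ⟨(rfl | ⟨hxI, _⟩), hxv⟩
      · omega
      · exact ⟨hxI, hxv⟩
    · rintro ⟨hxI, hxv⟩
      refine ⟨Or.inr ⟨hxI, ?_⟩, hxv⟩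
      intro hxp; subst hxp; omega
  have hg3 : ∀ v : ℕ, q.val ≤ v → g J v = g I v := by
    intro v hv
    have hfil : J.filter (fun x => x.val ≤ v) =
        insert q ((I.filter (fun x => x.val ≤ v)).erase p) := by
      ext x
      simp only [Finset.mem_filter, Finset.mem_insert, Finset.mem_erase, hJmem x]
      constructor
      · rintro ⟨(rfl | ⟨hxI, hxp⟩), hxv⟩
        · exact Or.inl rfl
        · exact Or.inr ⟨hxp, hxI, hxv⟩
      · rintro (rfl | ⟨hxp, hxI, hxv⟩)
        · exact ⟨Or.inl rfl, hv⟩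
        · exact ⟨Or.inr ⟨hxI, hxp⟩, hxv⟩
    have hpfil : p ∈ I.filter (fun x => x.val ≤ v) := by
      simp only [Finset.mem_filter]; exact ⟨hpI, by omega⟩
    have hqfil : q ∉ (I.filter (fun x => x.val ≤ v)).erase p := by
      simp only [Finset.mem_erase, Finset.mem_filter]
      intro hcon
      exact hqI hcon.2.1
    have hpos : 1 ≤ g I v := Finset.card_pos.mpr ⟨p, hpfil⟩
    unfold g
    rw [hfil, Finset.card_insert_of_notMem hqfil, Finset.card_erase_of_mem hpfil]
    unfold g at hpos
    omega
  have hgle : ∀ v : ℕ, g J v ≤ g I v := by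
    intro v
    rcases Nat.lt_or_ge v p.val with h | h
    · exact le_of_eq (hg2 v h)
    · rcases Nat.lt_or_ge v q.val with h' | h'
      · have := hg1 v h h'; omega
      · exact le_of_eq (hg3 v h')
  -- basic bounds on g I
  have hg_ge1 : ∀ v : ℕ, p.val ≤ v → 1 ≤ g I v := by
    intro v hv
    exact Finset.card_pos.mpr ⟨p, by simp only [Finset.mem_filter]; exact ⟨hpI, hv⟩⟩
  have hg_ler : ∀ v : ℕ, g I v ≤ r := fun v => hI ▸ g_le_card I v
  -- description of the skew shape
  have hD : ∀ x : ℕ × ℕ,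
      x ∈ cells (subsetToPartition r J hJ) \ cells (subsetToPartition r I hI) ↔
      (x.1 < r ∧ p.val ≤ x.2 + (r - 1 - x.1) ∧ x.2 + (r - 1 - x.1) < q.val ∧
        g I (x.2 + (r - 1 - x.1)) = r - x.1) := by
    intro x
    rw [Set.mem_diff, mem_cells_iff, mem_cells_iff]
    constructor
    · rintro ⟨⟨h1, h2⟩, h3⟩
      push_neg at h3
      have h4 := h3 h1
      by_cases hc : p.val ≤ x.2 + (r - 1 - x.1) ∧ x.2 + (r - 1 - x.1) < q.val
      · have h5 := hg1 _ hc.1 hc.2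
        exact ⟨h1, hc.1, hc.2, by omega⟩
      · exfalso
        have h5 : g J (x.2 + (r - 1 - x.1)) = g I (x.2 + (r - 1 - x.1)) := by
          rcases Nat.lt_or_ge (x.2 + (r - 1 - x.1)) p.val with h | h
          · exact hg2 _ h
          · exact hg3 _ (by omega)
        omega
    · rintro ⟨h1, h2, h3, h4⟩
      have h5 := hg1 _ h2 h3
      refine ⟨⟨h1, by omega⟩, ?_⟩
      rintro ⟨-, hcon⟩
      omega
  -- the cell associated to each position v ∈ [p, q)
  have hmem : ∀ v : ℕ, p.val ≤ v → v < q.val →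
      ((r - g I v, v + 1 - g I v) : ℕ × ℕ) ∈
        cells (subsetToPartition r J hJ) \ cells (subsetToPartition r I hI) := by
    intro v hv1 hv2
    rw [hD]
    have b1 := hg_ge1 v hv1
    have b2 := hg_ler v
    have b3 := g_le I v
    have harg : (v + 1 - g I v) + (r - 1 - (r - g I v)) = v := by omega
    dsimp only
    rw [harg]
    refine ⟨by omega, hv1, hv2, by omega⟩
  -- surjectivity of that map onto the skew shape
  have hsurj : ∀ x ∈ cells (subsetToPartition r J hJ) \ cells (subsetToPartition r I hI),
      ∃ v : ℕ, p.val ≤ v ∧ v < q.val ∧ ((r - g I v, v + 1 - g I v) : ℕ × ℕ) = x := by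
    intro x hx
    rw [hD] at hx
    obtain ⟨h1, h2, h3, h4⟩ := hx
    refine ⟨x.2 + (r - 1 - x.1), h2, h3, ?_⟩
    have b3 := g_le I (x.2 + (r - 1 - x.1))
    refine Prod.ext ?_ ?_ <;> dsimp only <;> omega
  refine ⟨?_, ⟨?_, ?_, ?_⟩, ?_⟩
  · -- pointwise inequality of partitions
    intro i
    rw [stp_eq, stp_eq]
    set j : Fin r := ⟨r - 1 - i.val, by have := i.isLt; omega⟩ with hj
    have h1 : (I.orderEmbOfFin hI j).val ≤ (J.orderEmbOfFin hJ j).val := by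
      rw [le_iff]
      have h2 := (le_iff J hJ j ((J.orderEmbOfFin hJ j).val)).mp le_rfl
      have h3 := hgle ((J.orderEmbOfFin hJ j).val)
      omega
    exact Nat.sub_le_sub_right h1 _
  · -- nonempty
    exact ⟨_, hmem p.val le_rfl hpq'⟩
  · -- connectivity
    have hadj : ∀ v : ℕ, p.val ≤ v → v + 1 < q.val →
        CellAdj ((r - g I v, v + 1 - g I v) : ℕ × ℕ)
          ((r - g I (v+1), v + 1 + 1 - g I (v+1)) : ℕ × ℕ) := by
      intro v hv1 hv2
      have b1 := hg_ge1 v hv1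
      have b2 := hg_ler (v+1)
      have b3 := g_le I v
      have b4 := g_mono I (show v ≤ v + 1 by omega)
      have b5 := g_succ I v
      unfold CellAdj
      dsimp only
      omega
    have hchain : ∀ d v : ℕ, p.val ≤ v → v + d < q.val →
        Relation.ReflTransGen
          (fun x y => x ∈ cells (subsetToPartition r J hJ) \ cells (subsetToPartition r I hI) ∧
            y ∈ cells (subsetToPartition r J hJ) \ cells (subsetToPartition r I hI) ∧
            CellAdj x y)
          ((r - g I v, v + 1 - g I v) : ℕ × ℕ)
          ((r - g I (v + d), v + d + 1 - g I (v + d)) : ℕ × ℕ) := by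
      intro d
      induction d with
      | zero => intro v _ _; exact Relation.ReflTransGen.refl
      | succ d ih =>
        intro v h1 h2
        refine Relation.ReflTransGen.tail (ih v h1 (by omega)) ?_
        exact ⟨hmem (v + d) (by omega) (by omega), hmem (v + d + 1) (by omega) (by omega),
          hadj (v + d) (by omega) (by omega)⟩
    intro a ha b hb
    obtain ⟨v, hv1, hv2, hva⟩ := hsurj a ha
    obtain ⟨w, hw1, hw2, hwb⟩ := hsurj b hb
    have hsymm : Symmetric (fun x y : ℕ × ℕ =>
        x ∈ cells (subsetToPartition r J hJ) \ cells (subsetToPartition r I hI) ∧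
        y ∈ cells (subsetToPartition r J hJ) \ cells (subsetToPartition r I hI) ∧
        CellAdj x y) := by
      rintro x y ⟨h1, h2, h3⟩
      refine ⟨h2, h1, ?_⟩
      unfold CellAdj at h3 ⊢
      tauto
    rcases le_or_gt v w with hvw | hvw
    · have := hchain (w - v) v hv1 (by omega)
      have heq : v + (w - v) = w := by omega
      rw [heq] at this
      rw [hva, hwb] at this
      exact this
    · have := hchain (v - w) w hw1 (by omega)
      have heq : w + (v - w) = v := by omega
      rw [heq] at this
      rw [hva, hwb] at this
      exact (@Relation.ReflTransGen.stdSymm _ _ ⟨fun _ _ h => hsymm h⟩).symm _ _ this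
  · -- no 2×2 square
    intro i j hcon
    obtain ⟨h1, h2, h3, h4⟩ := hcon
    rw [hD] at h1 h4
    dsimp only at h1 h4
    obtain ⟨ha1, ha2, ha3, ha4⟩ := h1
    obtain ⟨hb1, hb2, hb3, hb4⟩ := h4
    have heq : j + 1 + (r - 1 - (i + 1)) = j + (r - 1 - i) := by omega
    rw [heq] at hb4
    omega
  · -- cardinality
    have himg : cells (subsetToPartition r J hJ) \ cells (subsetToPartition r I hI) =
        (fun v : ℕ => ((r - g I v, v + 1 - g I v) : ℕ × ℕ)) '' Set.Ico p.val q.val := by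
      ext x
      simp only [Set.mem_image, Set.mem_Ico]
      constructor
      · intro hx
        obtain ⟨v, h1, h2, h3⟩ := hsurj x hx
        exact ⟨v, ⟨h1, h2⟩, h3⟩
      · rintro ⟨v, ⟨h1, h2⟩, rfl⟩
        exact hmem v h1 h2
    rw [himg, Set.ncard_image_of_injOn, ← Finset.coe_Ico, Set.ncard_coe_finset, Nat.card_Ico]
    intro v hv w hw heq
    simp only [Set.mem_Ico] at hv hw
    simp only [Prod.mk.injEq] at heq
    have b1 := hg_ge1 v hv.1
    have b2 := hg_ler v
    have b3 := g_le I v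
    have c1 := hg_ge1 w hw.1
    have c2 := hg_ler w
    have c3 := g_le I w
    omega
end
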